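/- arXiv:1810.00975 — 2 statements merged into one kernel-verified Lean document; each statement's English description precedes it below -/
import Mathlib

section
/- Let α > β > 0 and let h : [0,τ] → ℝ be nonnegative with ∫₀^τ h(a) da = 1. Then there exists γ ∈ (0, α − β) such that β ∫₀^τ h(a) e^{γ a} da + γ = α. -/
open Set Real

/-- characteristic-root existence.  If `α > β > 0` and `h` is a
continuous nonnegative function on `[0, τ]` with `∫₀^τ h = 1`, then there is
`γ ∈ (0, α - β)` with `β ∫₀^τ h a * exp (γ a) da + γ = α`. -/
theorem stmt_0 (τ α β : ℝ) (h : ℝ → ℝ) (hτ : 0 < τ)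
    (hc : ContinuousOn h (Set.Icc 0 τ))
    (hpos : ∀ a ∈ Set.Icc (0:ℝ) τ, 0 ≤ h a)
    (hint : ∫ a in (0:ℝ)..τ, h a = 1)
    (hαβ : β < α) (hβ : 0 < β) :
    ∃ γ ∈ Set.Ioo (0:ℝ) (α - β),
      β * (∫ a in (0:ℝ)..τ, h a * Real.exp (γ * a)) + γ = α := by
  have hτ' : (0:ℝ) ≤ τ := hτ.le
  -- continuous extension of h to all of ℝ
  set g : ℝ → ℝ := Set.IccExtend hτ' ((Set.Icc (0:ℝ) τ).restrict h) with hg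
  have hgc : Continuous g := by
    apply Continuous.Icc_extend'
    exact continuousOn_iff_continuous_restrict.1 hc
  have hgeq : ∀ x ∈ Set.Icc (0:ℝ) τ, g x = h x := fun x hx => by
    simp [hg, Set.IccExtend_of_mem hτ' _ hx]
    rfl
  have hcongr : ∀ γ : ℝ, (∫ a in (0:ℝ)..τ, h a * Real.exp (γ * a)) =
      ∫ a in (0:ℝ)..τ, g a * Real.exp (γ * a) := by
    intro γ
    apply intervalIntegral.integral_congr
    intro x hx
    rw [Set.uIcc_of_le hτ'] at hx
    simp only
    rw [hgeq x hx]
  -- the function F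
  set F : ℝ → ℝ := fun γ => β * (∫ a in (0:ℝ)..τ, g a * Real.exp (γ * a)) + γ with hF
  have hFc : Continuous F := by
    apply Continuous.add _ continuous_id
    apply Continuous.mul continuous_const
    exact intervalIntegral.continuous_parametric_intervalIntegral_of_continuous'
      (f := fun γ a => g a * Real.exp (γ * a))
      (by fun_prop) 0 τ
  have hF0 : F 0 = β := by
    simp only [hF]
    rw [← hcongr 0]
    simp only [zero_mul, Real.exp_zero, mul_one]
    rw [hint]; ring
  -- there is a point where h is positive in (0, τ]
  have hex : ∃ c ∈ Set.Icc (0:ℝ) τ, h c < h c * Real.exp ((α - β) * c) := by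
    by_contra hcon
    push_neg at hcon
    have hzero : ∀ x ∈ Set.Ioc (0:ℝ) τ, h x = 0 := by
      intro x hx
      have hxIcc : x ∈ Set.Icc (0:ℝ) τ := Set.Ioc_subset_Icc_self hx
      have h1 : 1 < Real.exp ((α - β) * x) :=
        Real.one_lt_exp_iff.2 (mul_pos (by linarith) hx.1)
      rcases (hpos x hxIcc).lt_or_eq with hlt | heq
      · exfalso
        have := hcon x hxIcc
        nlinarith
      · exact heq.symm
    have : (∫ a in (0:ℝ)..τ, h a) = 0 := by
      rw [intervalIntegral.integral_of_le hτ']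
      exact MeasureTheory.setIntegral_eq_zero_of_forall_eq_zero hzero
    rw [hint] at this; norm_num at this
  have hI : (1:ℝ) < ∫ a in (0:ℝ)..τ, h a * Real.exp ((α - β) * a) := by
    rw [← hint]
    apply intervalIntegral.integral_lt_integral_of_continuousOn_of_le_of_exists_lt hτ hc
    · exact hc.mul (by fun_prop)
    · intro x hx
      have hxIcc : x ∈ Set.Icc (0:ℝ) τ := Set.Ioc_subset_Icc_self hx
      have h1 : 1 ≤ Real.exp ((α - β) * x) := by
        rw [← Real.exp_zero]
        exact Real.exp_le_exp.2 (mul_nonneg (by linarith) hx.1.le)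
      nlinarith [hpos x hxIcc]
    · exact hex
  have hF1 : α < F (α - β) := by
    simp only [hF]
    rw [← hcongr (α - β)]
    nlinarith
  -- IVT
  have hsub : Set.Ioo (F 0) (F (α - β)) ⊆ F '' Set.Ioo 0 (α - β) :=
    intermediate_value_Ioo (by linarith) hFc.continuousOn
  have hα : α ∈ Set.Ioo (F 0) (F (α - β)) := ⟨by rw [hF0]; exact hαβ, hF1⟩
  obtain ⟨γ, hγmem, hγeq⟩ := hsub hα
  refine ⟨γ, hγmem, ?_⟩
  rw [hcongr γ]
  exact hγeq
end

section
/- Let v : [−τ,∞) → ℝ be a bounded C¹ solution of v'(t) = −f(v(t)) + ∫₀^τ h(a) ḡ(v(t−a)) da, where f is continuous, ḡ is continuous and nondecreasing, h ≥ 0 with ∫₀^τ h = 1. Let l = limsup_{t→∞} v(t) and suppose there exist tₙ → ∞ with v(tₙ) → l and v'(tₙ) → 0. Then 0 ≤ −f(l) + ḡ(l). Consequently, if ḡ(l) < f(l) for l > B (for some threshold B), then limsup_{t→∞} v(t) ≤ B. -/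
open Set Real Filter

/-- dissipativity along fluctuation sequences for the delayed
ODE `v' t = -f (v t) + ∫₀^τ h a * ḡ (v (t - a)) da`. -/
theorem stmt_17 (f gbar h v : ℝ → ℝ) (τ l : ℝ) (hτ : 0 < τ)
    (hfc : Continuous f) (hgc : Continuous gbar) (hgmono : Monotone gbar)
    (hhpos : ∀ a ∈ Set.Icc (0:ℝ) τ, 0 ≤ h a)
    (hhint : ∫ a in (0:ℝ)..τ, h a = 1)
    (hbdd : ∃ C : ℝ, ∀ t : ℝ, |v t| ≤ C)
    (hode : ∀ t : ℝ, 0 ≤ t →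
      HasDerivAt v (-f (v t) + ∫ a in (0:ℝ)..τ, h a * gbar (v (t - a))) t)
    (hl : l = Filter.limsup v Filter.atTop)
    (t : ℕ → ℝ)
    (ht : Filter.Tendsto t Filter.atTop Filter.atTop)
    (hvt : Filter.Tendsto (fun n => v (t n)) Filter.atTop (nhds l))
    (hvt' : Filter.Tendsto (fun n => deriv v (t n)) Filter.atTop (nhds 0)) :
    0 ≤ -f l + gbar l ∧
    ∀ B : ℝ, (∀ x : ℝ, B < x → gbar x < f x) → l ≤ B := by
  obtain ⟨C, hC⟩ := hbdd
  -- h is interval integrable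
  have hI : IntervalIntegrable h MeasureTheory.volume 0 τ := by
    by_contra hc
    rw [intervalIntegral.integral_undef hc] at hhint
    simp at hhint
  -- v is continuous at every s ≥ 0
  have hvcont : ∀ s : ℝ, 0 ≤ s → ContinuousAt v s := fun s hs =>
    (hode s hs).continuousAt
  -- boundedness for limsup
  have hbd : IsBoundedUnder (· ≤ ·) atTop v :=
    Filter.isBoundedUnder_of ⟨C, fun s => (abs_le.mp (hC s)).2⟩
  -- key inequality
  have key : ∀ ε : ℝ, 0 < ε → f l ≤ gbar (l + ε) := by
    intro ε hε
    have hls : Filter.limsup v Filter.atTop < l + ε := by rw [← hl]; linarith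
    have hev : ∀ᶠ s in atTop, v s < l + ε :=
      Filter.eventually_lt_of_limsup_lt hls hbd
    obtain ⟨T, hT⟩ := Filter.eventually_atTop.mp hev
    have hevn : ∀ᶠ n in atTop, max (T + τ) τ ≤ t n := ht.eventually_ge_atTop _
    have hineq : ∀ᶠ n in atTop, deriv v (t n) + f (v (t n)) ≤ gbar (l + ε) := by
      filter_upwards [hevn] with n hn
      set s := t n with hs
      have hsτ : τ ≤ s := le_trans (le_max_right _ _) hn
      have hsT : T + τ ≤ s := le_trans (le_max_left _ _) hn
      have hs0 : (0:ℝ) ≤ s := le_trans hτ.le hsτ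
      have hcontg : ContinuousOn (fun a => gbar (v (s - a))) (Set.uIcc 0 τ) := by
        intro a ha
        rw [Set.uIcc_of_le hτ.le] at ha
        have h0 : 0 ≤ s - a := by
          have := ha.2; linarith
        exact ((hgc.continuousAt.comp ((hvcont _ h0).comp
          ((continuousAt_const.sub continuousAt_id)))).continuousWithinAt)
      have hint1 : IntervalIntegrable (fun a => h a * gbar (v (s - a)))
          MeasureTheory.volume 0 τ := hI.mul_continuousOn hcontg
      have hint2 : IntervalIntegrable (fun a => h a * gbar (l + ε))
          MeasureTheory.volume 0 τ := hI.mul_const _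
      have hmono : ∫ a in (0:ℝ)..τ, h a * gbar (v (s - a)) ≤
          ∫ a in (0:ℝ)..τ, h a * gbar (l + ε) := by
        apply intervalIntegral.integral_mono_on hτ.le hint1 hint2
        intro a ha
        have hva : v (s - a) ≤ l + ε := by
          apply le_of_lt (hT _ _)
          have := ha.2; linarith
        exact mul_le_mul_of_nonneg_left (hgmono hva) (hhpos a ha)
      have hval : ∫ a in (0:ℝ)..τ, h a * gbar (l + ε) = gbar (l + ε) := by
        rw [intervalIntegral.integral_mul_const, hhint, one_mul]
      have hderiv : deriv v s = -f (v s) + ∫ a in (0:ℝ)..τ, h a * gbar (v (s - a)) :=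
        (hode s hs0).deriv
      rw [hderiv]
      rw [hval] at hmono
      linarith
    have hlim : Filter.Tendsto (fun n => deriv v (t n) + f (v (t n))) atTop
        (nhds (0 + f l)) := hvt'.add ((hfc.tendsto l).comp hvt)
    have := le_of_tendsto hlim hineq
    linarith
  -- pass to the limit ε → 0
  have hfg : f l ≤ gbar l := by
    have hseq : Filter.Tendsto (fun k : ℕ => l + 1 / (k + 1)) atTop (nhds (l + 0)) :=
      tendsto_const_nhds.add tendsto_one_div_add_atTop_nhds_zero_nat
    rw [add_zero] at hseq
    have hgl : Filter.Tendsto (fun k : ℕ => gbar (l + 1 / (k + 1))) atTop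
        (nhds (gbar l)) := (hgc.tendsto l).comp hseq
    refine ge_of_tendsto hgl (Filter.Eventually.of_forall fun k => key _ ?_)
    positivity
  refine ⟨by linarith, ?_⟩
  intro B hB
  by_contra h'
  push_neg at h'
  have := hB l h'
  linarith
end
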